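/- arXiv:1902.08910 — 2 statements merged into one kernel-verified Lean document; each statement's English description precedes it below -/
import Mathlib

section
/- Define f(x) = x / (exp(-x) - 1) for x ≠ 0. If u and v are distinct nonzero reals with u * exp(u) = v * exp(v), then f(u - v) = v. -/
theorem jeffrey_jankowski (u v : ℝ) (huv : u ≠ v) (hu : u ≠ 0) (hv : v ≠ 0)
    (h : u * Real.exp u = v * Real.exp v) :
    (u - v) / (Real.exp (-(u - v)) - 1) = v := by
  have he : Real.exp u ≠ 0 := Real.exp_ne_zero u
  have hev : Real.exp (-(u - v)) = u / v := by
    rw [neg_sub, Real.exp_sub]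
    field_simp
    linarith [h]
  rw [hev]
  have : u / v - 1 = (u - v) / v := by field_simp
  rw [this]
  field_simp [sub_ne_zero.mpr huv]
end

section
/- Let a, b ≠ 0 and x > 0, with u * exp(u) = a*x and w * exp(w) = (b*x)^2, u > 0, w > 0. If y = 2*u - w, then exp(y) = (a^2 / b^2) * (w / u^2) and (b^2/a^2) * y * exp(y) = (2*u - w) * w / u^2, hence 1 - (b^2/a^2)*y*exp(y) = ((u - w)/u)^2. -/
theorem two_w_minus_w_sq (a b x u w y : ℝ) (ha : a ≠ 0) (hb : b ≠ 0) (hx : x > 0)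
    (hu : u > 0) (hw : w > 0)
    (hux : u * Real.exp u = a * x) (hwx : w * Real.exp w = (b * x) ^ 2)
    (hy : y = 2 * u - w) :
    Real.exp y = (a ^ 2 / b ^ 2) * (w / u ^ 2) ∧
    (b ^ 2 / a ^ 2) * y * Real.exp y = (2 * u - w) * w / u ^ 2 ∧
    1 - (b ^ 2 / a ^ 2) * y * Real.exp y = ((u - w) / u) ^ 2 := by
  have hu0 : u ≠ 0 := ne_of_gt hu
  have hw0 : w ≠ 0 := ne_of_gt hw
  have h2 : Real.exp u = a * x / u := by
    rw [eq_div_iff hu0]; linarith [hux]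
  have h3 : Real.exp w = (b * x) ^ 2 / w := by
    rw [eq_div_iff hw0]; linarith [hwx]
  have hx0 : x ≠ 0 := ne_of_gt hx
  have h1 : Real.exp y = (a ^ 2 / b ^ 2) * (w / u ^ 2) := by
    rw [hy, show (2:ℝ) * u - w = u + u - w by ring, Real.exp_sub, Real.exp_add, h2, h3]
    field_simp
  refine ⟨h1, ?_, ?_⟩
  · rw [h1, hy]; field_simp
  · rw [h1, hy]; field_simp; ring
end
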